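/- Let Γ be a graph and let Γ' be the double of Γ along the star of a vertex x, with x deleted. If C is an induced cycle in Γ avoiding the star of x, then the image of C in each copy of Γ inside Γ' is an induced cycle in Γ', and any induced 4-cycle of Γ' containing two vertices of that image lies entirely inside that copy of Γ (together possibly with vertices of the common star boundary). -/

import Mathlib

/-- A closed walk is an induced (chordless) cycle if it is a cycle and the only
adjacencies among its vertices are the edges of the walk itself. -/
def IsInducedCycle {V : Type*} (G : SimpleGraph V) {v : V} (w : G.Walk v v) : Prop :=
  w.IsCycle ∧ ∀ a b, a ∈ w.support → b ∈ w.support → G.Adj a b → w.toSubgraph.Adj a b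

/-- An induced cycle is burst if it contains two distinct non-adjacent vertices that
both lie on some induced 4-cycle of the ambient graph. -/
def IsBurst {V : Type*} (G : SimpleGraph V) {v : V} (w : G.Walk v v) : Prop :=
  ∃ a b, a ∈ w.support ∧ b ∈ w.support ∧ a ≠ b ∧ ¬G.Adj a b ∧
    ∃ (c : V) (w4 : G.Walk c c), IsInducedCycle G w4 ∧ w4.length = 4 ∧
      a ∈ w4.support ∧ b ∈ w4.support
/-- Vertices of the double of `G` along the star of `x`, with `x` deleted: a first copy
containing everything except `x` (this includes the shared star of `x`), and a second
copy of the vertices outside the closed star of `x`. -/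
def DoubleVert {V : Type*} (G : SimpleGraph V) (x : V) : Type _ :=
  {v : V // v ≠ x} ⊕ {v : V // ¬(v = x ∨ G.Adj x v)}

/-- The double of `G` along the star of the vertex `x`, with `x` deleted. -/
def doubleMinusStar {V : Type*} (G : SimpleGraph V) (x : V) :
    SimpleGraph (DoubleVert G x) :=
  SimpleGraph.fromRel (fun a b =>
    match a, b with
    | Sum.inl a, Sum.inl b => G.Adj a.1 b.1
    | Sum.inl a, Sum.inr b => G.Adj a.1 b.1 ∧ G.Adj x a.1
    | Sum.inr a, Sum.inl b => G.Adj a.1 b.1 ∧ G.Adj x b.1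
    | Sum.inr a, Sum.inr b => G.Adj a.1 b.1)

section Aux
variable {V W : Type*} {G : SimpleGraph V} {G' : SimpleGraph W}

lemma inducedCycle_map (f : G →g G') (hf : Function.Injective f) {v : V} {p : G.Walk v v}
    (h : IsInducedCycle G p)
    (hrefl : ∀ a b, a ∈ p.support → b ∈ p.support → G'.Adj (f a) (f b) → G.Adj a b) :
    IsInducedCycle G' (p.map f) := by
  refine ⟨h.1.map hf, ?_⟩
  intro a b ha hb hadj
  rw [SimpleGraph.Walk.support_map, List.mem_map] at ha hb
  obtain ⟨a', ha', rfl⟩ := ha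
  obtain ⟨b', hb', rfl⟩ := hb
  have := h.2 a' b' ha' hb' (hrefl _ _ ha' hb' hadj)
  rw [SimpleGraph.Walk.toSubgraph_map]
  exact ⟨a', b', this, rfl, rfl⟩

lemma inducedCycle_of_map (f : G →g G') (hf : Function.Injective f) {v : V} {p : G.Walk v v}
    (h : IsInducedCycle G' (p.map f)) : IsInducedCycle G p := by
  refine ⟨(SimpleGraph.Walk.map_isCycle_iff_of_injective hf).mp h.1, ?_⟩
  intro a b ha hb hadj
  have h2 := h.2 (f a) (f b) (by rw [SimpleGraph.Walk.support_map]; exact List.mem_map_of_mem (f := f) ha)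
    (by rw [SimpleGraph.Walk.support_map]; exact List.mem_map_of_mem (f := f) hb) (f.map_adj hadj)
  rw [SimpleGraph.Walk.toSubgraph_map] at h2
  obtain ⟨a', b', hab, ha', hb'⟩ := h2
  rwa [hf ha', hf hb'] at hab

def liftWalk (G : SimpleGraph V) (S : Set V) :
    ∀ {u v : V} (p : G.Walk u v) (hu : u ∈ S) (hv : v ∈ S)
      (_ : ∀ a ∈ p.support, a ∈ S), (G.induce S).Walk ⟨u, hu⟩ ⟨v, hv⟩
  | _, _, SimpleGraph.Walk.nil, _, _, _ => SimpleGraph.Walk.nil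
  | _, _, SimpleGraph.Walk.cons h p, hu, hv, hp =>
      SimpleGraph.Walk.cons (by exact h)
        (liftWalk G S p (hp _ (by simp)) hv (fun a ha => hp a (by simp [ha])))

lemma liftWalk_map (G : SimpleGraph V) (S : Set V) {u v : V} (p : G.Walk u v)
    (hu : u ∈ S) (hv : v ∈ S) (hp : ∀ a ∈ p.support, a ∈ S) :
    (liftWalk G S p hu hv hp).map (SimpleGraph.Embedding.induce S).toHom = p := by
  induction p with
  | nil => rfl
  | cons h p ih =>
    exact congrArg (SimpleGraph.Walk.cons h) (ih _ _ _)

lemma four_cycle_adj (G : SimpleGraph V) {d : V} (w4 : G.Walk d d) (hl : w4.length = 4)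
    {b b1 b2 : V} (hb : b ∈ w4.support) (h1 : b1 ∈ w4.support) (h2 : b2 ∈ w4.support)
    (h12 : b1 ≠ b2) (hbb1 : b ≠ b1) (hbb2 : b ≠ b2) : G.Adj b b1 ∨ G.Adj b b2 := by
  match w4, hl with
  | SimpleGraph.Walk.cons ha1 (SimpleGraph.Walk.cons ha2 (SimpleGraph.Walk.cons ha3
      (SimpleGraph.Walk.cons ha4 SimpleGraph.Walk.nil))), _ =>
    simp only [SimpleGraph.Walk.support_cons, SimpleGraph.Walk.support_nil,
      List.mem_cons, List.mem_singleton, List.not_mem_nil, or_false] at hb h1 h2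
    have ha1' := ha1.symm
    have ha2' := ha2.symm
    have ha3' := ha3.symm
    have ha4' := ha4.symm
    rcases hb with rfl | rfl | rfl | rfl | rfl <;>
      rcases h1 with rfl | rfl | rfl | rfl | rfl <;>
      rcases h2 with rfl | rfl | rfl | rfl | rfl <;>
      simp_all

end Aux

section DMS
variable {V : Type*} (Γ : SimpleGraph V) (x : V)

lemma dms_adj_inl_inl (a b : {v : V // v ≠ x}) :
    (doubleMinusStar Γ x).Adj (Sum.inl a) (Sum.inl b) ↔ Γ.Adj a.1 b.1 := by
  constructor
  · rintro ⟨-, h | h⟩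
    · exact h
    · exact h.symm
  · intro h
    exact ⟨fun e => h.ne (congrArg Subtype.val (Sum.inl.inj e)), Or.inl h⟩

lemma dms_adj_inl_inr (a : {v : V // v ≠ x}) (b : {v : V // ¬(v = x ∨ Γ.Adj x v)}) :
    (doubleMinusStar Γ x).Adj (Sum.inl a) (Sum.inr b) ↔ Γ.Adj a.1 b.1 ∧ Γ.Adj x a.1 := by
  constructor
  · rintro ⟨-, h | h⟩
    · exact h
    · exact ⟨h.1.symm, h.2⟩
  · intro h
    exact ⟨Sum.inl_ne_inr, Or.inl h⟩

lemma dms_adj_inr_inr (a b : {v : V // ¬(v = x ∨ Γ.Adj x v)}) :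
    (doubleMinusStar Γ x).Adj (Sum.inr a) (Sum.inr b) ↔ Γ.Adj a.1 b.1 := by
  constructor
  · rintro ⟨-, h | h⟩
    · exact h
    · exact h.symm
  · intro h
    exact ⟨fun e => h.ne (congrArg Subtype.val (Sum.inr.inj e)), Or.inl h⟩

/-- Complement of the closed star of `x`. -/
def starCompl : Set V := {v : V | ¬(v = x ∨ Γ.Adj x v)}

def homL : Γ.induce (starCompl Γ x) →g doubleMinusStar Γ x where
  toFun v := Sum.inl ⟨v.1, fun h => v.2 (Or.inl h)⟩
  map_rel' := fun h => (dms_adj_inl_inl Γ x _ _).mpr h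

def homR : Γ.induce (starCompl Γ x) →g doubleMinusStar Γ x where
  toFun v := Sum.inr ⟨v.1, v.2⟩
  map_rel' := fun h => (dms_adj_inr_inr Γ x _ _).mpr h

lemma homL_inj : Function.Injective (homL Γ x) := by
  intro a b h
  have h' : (Sum.inl ⟨a.1, fun hh => a.2 (Or.inl hh)⟩ : DoubleVert Γ x)
      = Sum.inl ⟨b.1, fun hh => b.2 (Or.inl hh)⟩ := h
  rw [Sum.inl.injEq, Subtype.mk.injEq] at h'
  exact Subtype.ext h'

lemma homR_inj : Function.Injective (homR Γ x) := by
  intro a b h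
  have h' : (Sum.inr ⟨a.1, a.2⟩ : DoubleVert Γ x) = Sum.inr ⟨b.1, b.2⟩ := h
  replace h' := congrArg Subtype.val (Sum.inr.inj h')
  exact Subtype.ext h'

end DMS

theorem double_image_of_induced_cycle
    {V : Type*} (Γ : SimpleGraph V) (x : V) {c : V} (w : Γ.Walk c c)
    (hw : IsInducedCycle Γ w)
    (havoid : ∀ a ∈ w.support, ¬(a = x ∨ Γ.Adj x a)) :
    (∃ (hc : c ≠ x) (w1 : (doubleMinusStar Γ x).Walk (Sum.inl ⟨c, hc⟩) (Sum.inl ⟨c, hc⟩)),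
      IsInducedCycle (doubleMinusStar Γ x) w1 ∧
      (∀ b, b ∈ w1.support ↔ ∃ (a : V) (h : a ≠ x), a ∈ w.support ∧ b = Sum.inl ⟨a, h⟩)) ∧
    (∃ (hc : ¬(c = x ∨ Γ.Adj x c))
        (w2 : (doubleMinusStar Γ x).Walk (Sum.inr ⟨c, hc⟩) (Sum.inr ⟨c, hc⟩)),
      IsInducedCycle (doubleMinusStar Γ x) w2 ∧
      (∀ b, b ∈ w2.support ↔ ∃ (a : V) (h : ¬(a = x ∨ Γ.Adj x a)),
        a ∈ w.support ∧ b = Sum.inr ⟨a, h⟩)) ∧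
    (∀ (d : DoubleVert Γ x) (w4 : (doubleMinusStar Γ x).Walk d d),
      IsInducedCycle (doubleMinusStar Γ x) w4 → w4.length = 4 →
      (∃ b1 b2, b1 ∈ w4.support ∧ b2 ∈ w4.support ∧ b1 ≠ b2 ∧
        (∃ (a1 : V) (h1 : a1 ≠ x), a1 ∈ w.support ∧ b1 = Sum.inl ⟨a1, h1⟩) ∧
        (∃ (a2 : V) (h2 : a2 ≠ x), a2 ∈ w.support ∧ b2 = Sum.inl ⟨a2, h2⟩)) →
      ∀ b ∈ w4.support, ∃ (a : V) (h : a ≠ x), b = Sum.inl ⟨a, h⟩) ∧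
    (∀ (d : DoubleVert Γ x) (w4 : (doubleMinusStar Γ x).Walk d d),
      IsInducedCycle (doubleMinusStar Γ x) w4 → w4.length = 4 →
      (∃ b1 b2, b1 ∈ w4.support ∧ b2 ∈ w4.support ∧ b1 ≠ b2 ∧
        (∃ (a1 : V) (h1 : ¬(a1 = x ∨ Γ.Adj x a1)), a1 ∈ w.support ∧ b1 = Sum.inr ⟨a1, h1⟩) ∧
        (∃ (a2 : V) (h2 : ¬(a2 = x ∨ Γ.Adj x a2)), a2 ∈ w.support ∧ b2 = Sum.inr ⟨a2, h2⟩)) →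
      ∀ b ∈ w4.support,
        (∃ (a : V) (h : ¬(a = x ∨ Γ.Adj x a)), b = Sum.inr ⟨a, h⟩) ∨
        (∃ (a : V) (h : a ≠ x), Γ.Adj x a ∧ b = Sum.inl ⟨a, h⟩)) := by
  have hcS : c ∈ starCompl Γ x := havoid c w.start_mem_support
  set S := starCompl Γ x with hSdef
  have havoid' : ∀ a ∈ w.support, a ∈ S := havoid
  set lift := liftWalk Γ S w hcS hcS havoid' with hliftdef
  have hmap : lift.map (SimpleGraph.Embedding.induce S).toHom = w :=
    liftWalk_map Γ S w hcS hcS havoid'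
  have hlift : IsInducedCycle (Γ.induce S) lift :=
    inducedCycle_of_map (SimpleGraph.Embedding.induce (G := Γ) S).toHom
      (SimpleGraph.Embedding.induce (G := Γ) S).injective (by rw [hmap]; exact hw)
  have hsupp : w.support = lift.support.map (fun a => a.1) := by
    conv_lhs => rw [← hmap]
    erw [SimpleGraph.Walk.support_map]
    rfl
  refine ⟨?_, ?_, ?_, ?_⟩
  · -- first copy
    refine ⟨fun h => hcS (Or.inl h), lift.map (homL Γ x), ?_, ?_⟩
    · exact inducedCycle_map _ (homL_inj Γ x)
        hlift (fun a b _ _ h => (dms_adj_inl_inl Γ x _ _).mp h)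
    · intro b
      erw [SimpleGraph.Walk.support_map, List.mem_map]
      constructor
      · rintro ⟨a', ha', rfl⟩
        exact ⟨a'.1, fun h => a'.2 (Or.inl h),
          by rw [hsupp]; exact List.mem_map_of_mem ha', rfl⟩
      · rintro ⟨a, h, haw, rfl⟩
        rw [hsupp, List.mem_map] at haw
        obtain ⟨a', ha', ha'1⟩ := haw
        exact ⟨a', ha', by subst ha'1; rfl⟩
  · -- second copy
    refine ⟨hcS, lift.map (homR Γ x), ?_, ?_⟩
    · exact inducedCycle_map _ (homR_inj Γ x)
        hlift (fun a b _ _ h => (dms_adj_inr_inr Γ x _ _).mp h)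
    · intro b
      erw [SimpleGraph.Walk.support_map, List.mem_map]
      constructor
      · rintro ⟨a', ha', rfl⟩
        exact ⟨a'.1, a'.2,
          by rw [hsupp]; exact List.mem_map_of_mem ha', rfl⟩
      · rintro ⟨a, h, haw, rfl⟩
        rw [hsupp, List.mem_map] at haw
        obtain ⟨a', ha', ha'1⟩ := haw
        exact ⟨a', ha', by subst ha'1; rfl⟩
  · -- 4-cycles through the first copy
    rintro d w4 hind hlen ⟨b1, b2, hb1, hb2, hne, ⟨a1, h1, ha1, rfl⟩, ⟨a2, h2, ha2, rfl⟩⟩ b hb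
    cases b with
    | inl a => exact ⟨a.1, a.2, rfl⟩
    | inr u =>
      exfalso
      have hbb1 : (Sum.inr u : DoubleVert Γ x) ≠ Sum.inl ⟨a1, h1⟩ := by simp
      have hbb2 : (Sum.inr u : DoubleVert Γ x) ≠ Sum.inl ⟨a2, h2⟩ := by simp
      rcases four_cycle_adj _ w4 hlen hb hb1 hb2 hne hbb1 hbb2 with h | h
      · exact havoid a1 ha1 (Or.inr ((dms_adj_inl_inr Γ x _ _).mp h.symm).2)
      · exact havoid a2 ha2 (Or.inr ((dms_adj_inl_inr Γ x _ _).mp h.symm).2)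
  · -- 4-cycles through the second copy
    rintro d w4 hind hlen ⟨b1, b2, hb1, hb2, hne, ⟨a1, h1, ha1, rfl⟩, ⟨a2, h2, ha2, rfl⟩⟩ b hb
    cases b with
    | inr u => exact Or.inl ⟨u.1, u.2, rfl⟩
    | inl a =>
      refine Or.inr ⟨a.1, a.2, ?_, rfl⟩
      have hbb1 : (Sum.inl a : DoubleVert Γ x) ≠ Sum.inr ⟨a1, h1⟩ := by simp
      have hbb2 : (Sum.inl a : DoubleVert Γ x) ≠ Sum.inr ⟨a2, h2⟩ := by simp
      rcases four_cycle_adj _ w4 hlen hb hb1 hb2 hne hbb1 hbb2 with h | h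
      · exact ((dms_adj_inl_inr Γ x _ _).mp h).2
      · exact ((dms_adj_inl_inr Γ x _ _).mp h).2
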